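/- Let G1, G2 be groups and φ : G1 → G2 a bijection such that a multiset over G1 is a product-one sequence over G1 if and only if its termwise image under φ is a product-one sequence over G2. If g1, g2, g3 in G1 satisfy g1 g2 ≠ g2 g1 with φ(g1 g2) = φ(g1) φ(g2), and g1 g3 ≠ g3 g1 with φ(g1 g3) = φ(g3) φ(g1), then φ(g1 g2⁻¹) = φ(g1) φ(g2⁻¹), φ(g2⁻¹ g1) = φ(g2⁻¹) φ(g1), φ(g1 g3⁻¹) = φ(g3⁻¹) φ(g1), and φ(g3⁻¹ g1) = φ(g1) φ(g3⁻¹). -/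
import Mathlib


/-- A multiset `S` over a group `G` is a *product-one sequence* if its terms can be
ordered so that their product is `1`. -/
def IsProductOne {G : Type*} [Group G] (S : Multiset G) : Prop :=
  ∃ l : List G, (l : Multiset G) = S ∧ l.prod = 1

/-- The monoid `B(G)` of product-one sequences over `G`, as a submonoid of the free
abelian monoid (finite multisets under addition) over `G`. -/
def ProductOneSubmonoid (G : Type*) [Group G] : AddSubmonoid (Multiset G) where
  carrier := {S | IsProductOne S}
  zero_mem' := ⟨[], rfl, rfl⟩
  add_mem' := by
    rintro a b ⟨l1, rfl, p1⟩ ⟨l2, rfl, p2⟩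
    exact ⟨l1 ++ l2, by simp, by simp [p1, p2]⟩


lemma cyc1 {G : Type*} [Group G] {x y : G} (h : x * y = 1) : y * x = 1 := by
  have : x = y⁻¹ := mul_eq_one_iff_eq_inv.mp h
  subst this; simp

lemma pone2 {G : Type*} [Group G] {u v : G}
    (h : IsProductOne (([u, v] : List G) : Multiset G)) : u * v = 1 := by
  obtain ⟨l, hl, hp⟩ := h
  rw [Multiset.coe_eq_coe] at hl
  have hm := List.mem_permutations'.2 hl
  simp [List.permutations', List.permutations'Aux] at hm
  rcases hm with rfl | rfl
  · simpa using hp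
  · exact cyc1 (by simpa using hp)

lemma pone3 {G : Type*} [Group G] {u v w : G}
    (h : IsProductOne (([u, v, w] : List G) : Multiset G)) :
    u * v * w = 1 ∨ u * w * v = 1 := by
  obtain ⟨l, hl, hp⟩ := h
  rw [Multiset.coe_eq_coe] at hl
  have hm := List.mem_permutations'.2 hl
  simp [List.permutations', List.permutations'Aux] at hm
  rcases hm with rfl | rfl | rfl | rfl | rfl | rfl <;>
    simp only [List.prod_cons, List.prod_nil, mul_one] at hp
  · exact Or.inl (by rw [mul_assoc]; exact hp)
  · exact Or.inr (cyc1 hp)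
  · exact Or.inl (by rw [mul_assoc]; exact cyc1 (by rw [mul_assoc]; exact hp))
  · exact Or.inr (by rw [mul_assoc]; exact hp)
  · exact Or.inl (cyc1 hp)
  · exact Or.inr (by rw [mul_assoc]; exact cyc1 (by rw [mul_assoc]; exact hp))

/-- front element from a triple product: u = w⁻¹ * v⁻¹ -/
lemma solve_front {G : Type*} [Group G] {u v w : G} (h : u * v * w = 1) : u = w⁻¹ * v⁻¹ := by
  have h1 : u * (v * w) = 1 := by rw [← mul_assoc]; exact h
  have : u = (v * w)⁻¹ := mul_eq_one_iff_eq_inv.mp h1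
  rw [this, mul_inv_rev]

lemma comm_of_conj {G : Type*} [Group G] {k x y : G} (h : k * (x * y⁻¹) * k⁻¹ = 1) : x = y := by
  have h1 : k * (x * y⁻¹) = k * 1 := by
    have := mul_eq_one_iff_eq_inv.mp h
    simpa using this
  exact mul_inv_eq_one.mp (mul_left_cancel h1)

theorem A6 (G1 G2 : Type*) [Group G1] [Group G2]
    (φ : G1 → G2) (hbij : Function.Bijective φ)
    (h : ∀ S : Multiset G1, IsProductOne S ↔ IsProductOne (S.map φ))
    (g1 g2 g3 : G1)
    (hne12 : g1 * g2 ≠ g2 * g1) (h12 : φ (g1 * g2) = φ g1 * φ g2)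
    (hne13 : g1 * g3 ≠ g3 * g1) (h13 : φ (g1 * g3) = φ g3 * φ g1) :
    φ (g1 * g2⁻¹) = φ g1 * φ g2⁻¹ ∧ φ (g2⁻¹ * g1) = φ g2⁻¹ * φ g1 ∧
    φ (g1 * g3⁻¹) = φ g3⁻¹ * φ g1 ∧ φ (g3⁻¹ * g1) = φ g1 * φ g3⁻¹ := by
  -- φ of inverses
  have hinv : ∀ x : G1, φ x⁻¹ = (φ x)⁻¹ := by
    intro x
    have hp : IsProductOne (([x, x⁻¹] : List G1) : Multiset G1) :=
      ⟨[x, x⁻¹], rfl, by simp only [List.prod_cons, List.prod_nil, mul_one]; group⟩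
    have himg := (h _).1 hp
    rw [show (Multiset.map φ (([x, x⁻¹] : List G1) : Multiset G1))
        = (([φ x, φ x⁻¹] : List G2) : Multiset G2) from by simp] at himg
    have h2 := pone2 himg
    exact mul_eq_one_iff_eq_inv.mp (cyc1 h2)
  -- φ of g1²
  have hsq : φ (g1 * g1) = φ g1 * φ g1 := by
    have hp : IsProductOne (([g1⁻¹, g1⁻¹, g1 * g1] : List G1) : Multiset G1) :=
      ⟨[g1⁻¹, g1⁻¹, g1 * g1], rfl, by simp only [List.prod_cons, List.prod_nil, mul_one]; group⟩
    have himg := (h _).1 hp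
    rw [show (Multiset.map φ (([g1⁻¹, g1⁻¹, g1 * g1] : List G1) : Multiset G1))
        = (([φ g1⁻¹, φ g1⁻¹, φ (g1 * g1)] : List G2) : Multiset G2) from by simp] at himg
    rcases pone3 himg with hp1 | hp1
    · have h1 : (φ g1⁻¹ * φ g1⁻¹) * (φ (g1 * g1)) = 1 := hp1
      have := mul_eq_one_iff_eq_inv.mp (cyc1 h1)
      rw [this, hinv, mul_inv_rev]; simp
    · -- φ g1⁻¹ * φ (g1*g1) * φ g1⁻¹ = 1 : middle unknown
      have h1 : φ g1⁻¹ * (φ (g1 * g1) * φ g1⁻¹) = 1 := by rw [← mul_assoc]; exact hp1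
      have h2 : φ (g1 * g1) * φ g1⁻¹ = (φ g1⁻¹)⁻¹ :=
        mul_eq_one_iff_eq_inv.mp (cyc1 h1)
      have h3 := eq_mul_inv_of_mul_eq h2
      rw [h3, hinv, inv_inv]
  have e1 : φ ((g1 * g1)⁻¹) = (φ g1 * φ g1)⁻¹ := by rw [hinv, hsq]
  -- options for x := φ (g1 * g2⁻¹)
  have hx : φ (g1 * g2⁻¹) = φ g1 * (φ g2)⁻¹ ∨ φ (g1 * g2⁻¹) = (φ g2)⁻¹ * φ g1 := by
    have hp : IsProductOne (([g1 * g2⁻¹, g2, g1⁻¹] : List G1) : Multiset G1) :=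
      ⟨[g1 * g2⁻¹, g2, g1⁻¹], rfl, by simp only [List.prod_cons, List.prod_nil, mul_one]; group⟩
    have himg := (h _).1 hp
    rw [show (Multiset.map φ (([g1 * g2⁻¹, g2, g1⁻¹] : List G1) : Multiset G1))
        = (([φ (g1 * g2⁻¹), φ g2, φ g1⁻¹] : List G2) : Multiset G2) from by simp] at himg
    rcases pone3 himg with hp1 | hp1
    · left
      have := solve_front hp1
      rw [this, hinv, inv_inv]
    · right
      have := solve_front hp1
      rw [this, hinv, inv_inv]
  -- rule out the bad case
  have hx2 : φ (g1 * g2⁻¹) = φ g1 * (φ g2)⁻¹ := by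
    rcases hx with hgood | hbad
    · exact hgood
    exfalso
    have himg : IsProductOne
        ((Multiset.map φ (([g1 * g2⁻¹, (g1 * g1)⁻¹, g1 * g2] : List G1) : Multiset G1))) := by
      rw [show (Multiset.map φ (([g1 * g2⁻¹, (g1 * g1)⁻¹, g1 * g2] : List G1) : Multiset G1))
          = (([φ (g1 * g2⁻¹), φ ((g1 * g1)⁻¹), φ (g1 * g2)] : List G2) : Multiset G2) from by simp]
      refine ⟨[φ (g1 * g2⁻¹), φ ((g1 * g1)⁻¹), φ (g1 * g2)], rfl, ?_⟩
      simp only [List.prod_cons, List.prod_nil, mul_one]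
      rw [hbad, e1, h12]; group
    have hpre := (h _).2 himg
    rcases pone3 hpre with hp1 | hp1
    · -- (g1 g2⁻¹)(g1 g1)⁻¹(g1 g2) = 1 forces commuting
      have hkey : (g1 * g2⁻¹ * g1⁻¹) * ((g2 * g1) * (g1 * g2)⁻¹) * (g1 * g2⁻¹ * g1⁻¹)⁻¹ = 1 := by
        rw [show (g1 * g2⁻¹ * g1⁻¹) * ((g2 * g1) * (g1 * g2)⁻¹) * (g1 * g2⁻¹ * g1⁻¹)⁻¹
            = (g1 * g2⁻¹) * (g1 * g1)⁻¹ * (g1 * g2) from by group]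
        exact hp1
      exact hne12 (comm_of_conj hkey).symm
    · have hkey : (g1 * g2⁻¹) * ((g1 * g2) * (g2 * g1)⁻¹) * (g1 * g2⁻¹)⁻¹ = 1 := by
        rw [show (g1 * g2⁻¹) * ((g1 * g2) * (g2 * g1)⁻¹) * (g1 * g2⁻¹)⁻¹
            = (g1 * g2⁻¹) * (g1 * g2) * (g1 * g1)⁻¹ from by group]
        exact hp1
      exact hne12 (comm_of_conj hkey)
  -- φ (g2⁻¹ * g1)
  have hy2 : φ (g2⁻¹ * g1) = (φ g2)⁻¹ * φ g1 := by
    have hp : IsProductOne (([g2⁻¹ * g1, g1⁻¹, g2] : List G1) : Multiset G1) :=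
      ⟨[g2⁻¹ * g1, g1⁻¹, g2], rfl, by simp only [List.prod_cons, List.prod_nil, mul_one]; group⟩
    have himg := (h _).1 hp
    rw [show (Multiset.map φ (([g2⁻¹ * g1, g1⁻¹, g2] : List G1) : Multiset G1))
        = (([φ (g2⁻¹ * g1), φ g1⁻¹, φ g2] : List G2) : Multiset G2) from by simp] at himg
    rcases pone3 himg with hp1 | hp1
    · have := solve_front hp1
      rw [this, hinv, inv_inv]
    · exfalso
      have heq : φ (g2⁻¹ * g1) = φ (g1 * g2⁻¹) := by
        have := solve_front hp1
        rw [this, hinv, inv_inv, hx2]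
      have := hbij.injective heq
      apply hne12
      have h2 := congrArg (fun z => g2 * z * g2) this
      simpa [mul_assoc] using h2
  -- options for x3 := φ (g1 * g3⁻¹)
  have hx3 : φ (g1 * g3⁻¹) = (φ g3)⁻¹ * φ g1 := by
    have hp : IsProductOne (([g1 * g3⁻¹, g3, g1⁻¹] : List G1) : Multiset G1) :=
      ⟨[g1 * g3⁻¹, g3, g1⁻¹], rfl, by simp only [List.prod_cons, List.prod_nil, mul_one]; group⟩
    have himg := (h _).1 hp
    rw [show (Multiset.map φ (([g1 * g3⁻¹, g3, g1⁻¹] : List G1) : Multiset G1))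
        = (([φ (g1 * g3⁻¹), φ g3, φ g1⁻¹] : List G2) : Multiset G2) from by simp] at himg
    rcases pone3 himg with hp1 | hp1
    · -- bad case: φ (g1 g3⁻¹) = a c⁻¹
      exfalso
      have hbad : φ (g1 * g3⁻¹) = φ g1 * (φ g3)⁻¹ := by
        have := solve_front hp1
        rw [this, hinv, inv_inv]
      have himg2 : IsProductOne
          ((Multiset.map φ (([g1 * g3, (g1 * g1)⁻¹, g1 * g3⁻¹] : List G1) : Multiset G1))) := by
        rw [show (Multiset.map φ (([g1 * g3, (g1 * g1)⁻¹, g1 * g3⁻¹] : List G1) : Multiset G1))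
            = (([φ (g1 * g3), φ ((g1 * g1)⁻¹), φ (g1 * g3⁻¹)] : List G2) : Multiset G2) from by simp]
        refine ⟨[φ (g1 * g3), φ ((g1 * g1)⁻¹), φ (g1 * g3⁻¹)], rfl, ?_⟩
        simp only [List.prod_cons, List.prod_nil, mul_one]
        rw [hbad, e1, h13]; group
      have hpre := (h _).2 himg2
      rcases pone3 hpre with hq1 | hq1
      · have hkey : (1 : G1) * ((g1 * g3) * (g3 * g1)⁻¹) * (1 : G1)⁻¹ = 1 := by
          rw [show (1 : G1) * ((g1 * g3) * (g3 * g1)⁻¹) * (1 : G1)⁻¹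
              = (g1 * g3) * (g1 * g1)⁻¹ * (g1 * g3⁻¹) from by group]
          exact hq1
        exact hne13 (comm_of_conj hkey)
      · have hkey : g1 * ((g3 * g1) * (g1 * g3)⁻¹) * g1⁻¹ = 1 := by
          rw [show g1 * ((g3 * g1) * (g1 * g3)⁻¹) * g1⁻¹
              = (g1 * g3) * (g1 * g3⁻¹) * (g1 * g1)⁻¹ from by group]
          exact hq1
        exact hne13 (comm_of_conj hkey).symm
    · have := solve_front hp1
      rw [this, hinv, inv_inv]
  -- φ (g3⁻¹ * g1)
  have hy3 : φ (g3⁻¹ * g1) = φ g1 * (φ g3)⁻¹ := by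
    have hp : IsProductOne (([g3⁻¹ * g1, g1⁻¹, g3] : List G1) : Multiset G1) :=
      ⟨[g3⁻¹ * g1, g1⁻¹, g3], rfl, by simp only [List.prod_cons, List.prod_nil, mul_one]; group⟩
    have himg := (h _).1 hp
    rw [show (Multiset.map φ (([g3⁻¹ * g1, g1⁻¹, g3] : List G1) : Multiset G1))
        = (([φ (g3⁻¹ * g1), φ g1⁻¹, φ g3] : List G2) : Multiset G2) from by simp] at himg
    rcases pone3 himg with hp1 | hp1
    · exfalso
      have heq : φ (g3⁻¹ * g1) = φ (g1 * g3⁻¹) := by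
        have := solve_front hp1
        rw [this, hinv, inv_inv, hx3]
      have := hbij.injective heq
      apply hne13
      have h2 := congrArg (fun z => g3 * z * g3) this
      simpa [mul_assoc] using h2
    · have := solve_front hp1
      rw [this, hinv, inv_inv]
  refine ⟨?_, ?_, ?_, ?_⟩
  · rw [hx2, hinv]
  · rw [hy2, hinv]
  · rw [hx3, hinv]
  · rw [hy3, hinv]
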